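/- The spectral R-matrix is CP-invariant: for any invertible antidiagonal matrix U = Σ_a u_a E_{a,N+1−a}, one has R_{21}(z) = (U⊗U) R_{12}(z) (U⊗U)⁻¹. -/

import Mathlib

open Matrix Kronecker

noncomputable section

variable {K : Type*} [Field K]

/-- Elementary matrix `E i j` with a `1` in position `(i,j)`. -/
def Emat (N : ℕ) (i j : Fin N) : Matrix (Fin N) (Fin N) K :=
  Matrix.single i j 1

/-- The `q`-permutation operator
`P^q = Σ_i E_{ii}⊗E_{ii} + q Σ_{i>j} E_{ij}⊗E_{ji} + q⁻¹ Σ_{i<j} E_{ij}⊗E_{ji}`. -/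
def Pq (N : ℕ) (q : K) : Matrix (Fin N × Fin N) (Fin N × Fin N) K :=
  (∑ i : Fin N, Emat N i i ⊗ₖ Emat N i i)
    + q • ∑ i : Fin N, ∑ j : Fin N, (if j < i then Emat N i j ⊗ₖ Emat N j i else 0)
    + q⁻¹ • ∑ i : Fin N, ∑ j : Fin N, (if i < j then Emat N i j ⊗ₖ Emat N j i else 0)

/-- The (undeformed) permutation operator `P = Σ_{a,b} E_{ab}⊗E_{ba}`. -/
def Pperm (N : ℕ) : Matrix (Fin N × Fin N) (Fin N × Fin N) K :=
  ∑ a : Fin N, ∑ b : Fin N, Emat N a b ⊗ₖ Emat N b a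

/-- The constant `R`-matrix of `U_q(gl(N))`:
`R = q Σ_a E_{aa}⊗E_{aa} + Σ_{a≠b} E_{aa}⊗E_{bb} + (q−q⁻¹) Σ_{a<b} E_{ab}⊗E_{ba}`. -/
def Rconst (N : ℕ) (q : K) : Matrix (Fin N × Fin N) (Fin N × Fin N) K :=
  q • (∑ a : Fin N, Emat N a a ⊗ₖ Emat N a a)
    + (∑ a : Fin N, ∑ b : Fin N, (if a ≠ b then Emat N a a ⊗ₖ Emat N b b else 0))
    + (q - q⁻¹) • ∑ a : Fin N, ∑ b : Fin N, (if a < b then Emat N a b ⊗ₖ Emat N b a else 0)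

/-- `b(z) = z − z⁻¹`; note `a(z) = qz − q⁻¹z⁻¹ = bf (q*z)`. -/
def bf (z : K) : K := z - z⁻¹

/-- The spectral-parameter `R`-matrix `R(z) = b(z)(I⊗I − P^q) + a(z)P`. -/
def Rz (N : ℕ) (q z : K) : Matrix (Fin N × Fin N) (Fin N × Fin N) K :=
  bf z • ((1 : Matrix (Fin N × Fin N) (Fin N × Fin N) K) - Pq N q) + bf (q * z) • Pperm N

/-- `A ↦ A_{21} = P A P` : exchange the two tensor factors. -/
def sw {N : ℕ} {R : Type*} (A : Matrix (Fin N × Fin N) (Fin N × Fin N) R) :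
    Matrix (Fin N × Fin N) (Fin N × Fin N) R :=
  Matrix.of fun p r => A (p.2, p.1) (r.2, r.1)

/-- Partial transposition in the first tensor factor. -/
def pt1 {N : ℕ} {R : Type*} (A : Matrix (Fin N × Fin N) (Fin N × Fin N) R) :
    Matrix (Fin N × Fin N) (Fin N × Fin N) R :=
  Matrix.of fun p r => A (r.1, p.2) (p.1, r.2)

/-- Partial transposition in the second tensor factor. -/
def pt2 {N : ℕ} {R : Type*} (A : Matrix (Fin N × Fin N) (Fin N × Fin N) R) :
    Matrix (Fin N × Fin N) (Fin N × Fin N) R :=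
  Matrix.of fun p r => A (p.1, r.2) (r.1, p.2)

/-- Partial trace over the first tensor factor. -/
def ptr1 {N : ℕ} {R : Type*} [AddCommMonoid R]
    (A : Matrix (Fin N × Fin N) (Fin N × Fin N) R) : Matrix (Fin N) (Fin N) R :=
  Matrix.of fun i j => ∑ k : Fin N, A (k, i) (k, j)

/-- Partial trace over the second tensor factor. -/
def ptr2 {N : ℕ} {R : Type*} [AddCommMonoid R]
    (A : Matrix (Fin N × Fin N) (Fin N × Fin N) R) : Matrix (Fin N) (Fin N) R :=
  Matrix.of fun i j => ∑ k : Fin N, A (i, k) (j, k)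

/-- Embed an operator on `C^N ⊗ C^N` as acting on factors 1,2 of `C^N ⊗ C^N ⊗ C^N`. -/
def amp12 {N : ℕ} (A : Matrix (Fin N × Fin N) (Fin N × Fin N) K) :
    Matrix (Fin N × Fin N × Fin N) (Fin N × Fin N × Fin N) K :=
  Matrix.of fun p r => A (p.1, p.2.1) (r.1, r.2.1) * (if p.2.2 = r.2.2 then 1 else 0)

/-- Embed an operator on `C^N ⊗ C^N` as acting on factors 1,3 of `C^N ⊗ C^N ⊗ C^N`. -/
def amp13 {N : ℕ} (A : Matrix (Fin N × Fin N) (Fin N × Fin N) K) :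
    Matrix (Fin N × Fin N × Fin N) (Fin N × Fin N × Fin N) K :=
  Matrix.of fun p r => A (p.1, p.2.2) (r.1, r.2.2) * (if p.2.1 = r.2.1 then 1 else 0)

/-- Embed an operator on `C^N ⊗ C^N` as acting on factors 2,3 of `C^N ⊗ C^N ⊗ C^N`. -/
def amp23 {N : ℕ} (A : Matrix (Fin N × Fin N) (Fin N × Fin N) K) :
    Matrix (Fin N × Fin N × Fin N) (Fin N × Fin N × Fin N) K :=
  Matrix.of fun p r => (if p.1 = r.1 then 1 else 0) * A (p.2.1, p.2.2) (r.2.1, r.2.2)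

/-- The `q`-deformation of a matrix: `(A^q)_{ij} = q^{sgn(j-i)} A_{ij}`. -/
def deform {R : Type*} [Ring R] [Algebra K R] {N : ℕ} (q : K)
    (A : Matrix (Fin N) (Fin N) R) : Matrix (Fin N) (Fin N) R :=
  Matrix.of fun i j =>
    (q ^ (if i < j then (1 : ℤ) else if j < i then (-1 : ℤ) else 0)) • A i j

/-- The matrix `M = Σ_a θ₀ q^{N−2a+1} E_{aa}` (with 1-indexed `a`). -/
def Mθ (N : ℕ) (q θ : K) : Matrix (Fin N) (Fin N) K :=
  Matrix.diagonal fun a => θ * q ^ ((N : ℤ) - 2 * ((a : ℕ) : ℤ) - 1)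

/-- An invertible antidiagonal matrix `U = Σ_a u_a E_{a, N+1−a}`. -/
def antidiag (N : ℕ) (u : Fin N → K) : Matrix (Fin N) (Fin N) K :=
  Matrix.of fun i j => if j = Fin.rev i then u i else 0

lemma Emat_apply (N : ℕ) (i j a c : Fin N) :
    (Emat N i j : Matrix (Fin N) (Fin N) K) a c = if i = a ∧ j = c then 1 else 0 := by
  simp [Emat, Matrix.single]

lemma sum_delta_pair {N : ℕ} (f : Fin N → Fin N → K) (a b : Fin N)
    (h0 : ∀ x y, x ≠ a ∨ y ≠ b → f x y = 0) :
    (∑ x : Fin N, ∑ y : Fin N, f x y) = f a b := by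
  rw [Finset.sum_eq_single a (fun x _ hx => Finset.sum_eq_zero fun y _ => h0 x y (Or.inl hx))
      (fun h => absurd (Finset.mem_univ a) h)]
  exact Finset.sum_eq_single b (fun y _ hy => h0 a y (Or.inr hy))
    (fun h => absurd (Finset.mem_univ b) h)

lemma sum_delta_one {N : ℕ} (f : Fin N → K) (a : Fin N)
    (h0 : ∀ x, x ≠ a → f x = 0) :
    (∑ x : Fin N, f x) = f a :=
  Finset.sum_eq_single a (fun x _ hx => h0 x hx) (fun h => absurd (Finset.mem_univ a) h)

lemma Pperm_apply (N : ℕ) (a b c d : Fin N) :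
    (Pperm N : Matrix (Fin N × Fin N) (Fin N × Fin N) K) (a,b) (c,d)
      = if a = d ∧ b = c then 1 else 0 := by
  have key : (Pperm N : Matrix (Fin N × Fin N) (Fin N × Fin N) K) (a,b) (c,d)
      = ∑ x : Fin N, ∑ y : Fin N,
          (Emat N x y : Matrix (Fin N) (Fin N) K) a c * (Emat N y x : Matrix (Fin N) (Fin N) K) b d := by
    simp [Pperm, Matrix.sum_apply]
  rw [key, sum_delta_pair _ a b (by intro x y h; rcases h with h | h <;> simp [Emat_apply, h])]
  simp only [Emat_apply, ite_and, eq_comm, mul_ite, mul_one, mul_zero, ite_mul, one_mul, zero_mul]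
  split_ifs <;> simp_all

lemma Pq_apply (N : ℕ) (q : K) (a b c d : Fin N) :
    (Pq N q) (a,b) (c,d)
      = (if a = b ∧ a = c ∧ a = d then 1 else 0)
        + q * (if b < a ∧ c = b ∧ d = a then 1 else 0)
        + q⁻¹ * (if a < b ∧ c = b ∧ d = a then 1 else 0) := by
  have h1 : (∑ i : Fin N, (Emat N i i ⊗ₖ Emat N i i : Matrix (Fin N × Fin N) (Fin N × Fin N) K)) (a,b) (c,d)
      = if a = b ∧ a = c ∧ a = d then 1 else 0 := by
    have key : (∑ i : Fin N, (Emat N i i ⊗ₖ Emat N i i : Matrix (Fin N × Fin N) (Fin N × Fin N) K)) (a,b) (c,d)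
        = ∑ i : Fin N, (Emat N i i : Matrix (Fin N) (Fin N) K) a c * (Emat N i i : Matrix (Fin N) (Fin N) K) b d := by
      simp [Matrix.sum_apply]
    rw [key, sum_delta_one _ a (by intro x hx; simp [Emat_apply, hx])]
    simp only [Emat_apply, ite_and, eq_comm, mul_ite, mul_one, mul_zero, ite_mul, one_mul, zero_mul]
    split_ifs <;> simp_all
  have h2 : (∑ i : Fin N, ∑ j : Fin N,
        (if j < i then (Emat N i j ⊗ₖ Emat N j i : Matrix (Fin N × Fin N) (Fin N × Fin N) K) else 0)) (a,b) (c,d)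
      = if b < a ∧ c = b ∧ d = a then 1 else 0 := by
    have key : (∑ i : Fin N, ∑ j : Fin N,
        (if j < i then (Emat N i j ⊗ₖ Emat N j i : Matrix (Fin N × Fin N) (Fin N × Fin N) K) else 0)) (a,b) (c,d)
        = ∑ i : Fin N, ∑ j : Fin N, (if j < i then
            (Emat N i j : Matrix (Fin N) (Fin N) K) a c * (Emat N j i : Matrix (Fin N) (Fin N) K) b d else 0) := by
      simp [Matrix.sum_apply, ite_apply, apply_ite (fun M : Matrix (Fin N × Fin N) (Fin N × Fin N) K => M (a,b) (c,d))]
    rw [key, sum_delta_pair _ a b (by intro x y h; rcases h with h | h <;> simp [Emat_apply, h])]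
    simp only [Emat_apply, ite_and, eq_comm, mul_ite, mul_one, mul_zero, ite_mul, one_mul, zero_mul]
    split_ifs <;> simp_all
  have h3 : (∑ i : Fin N, ∑ j : Fin N,
        (if i < j then (Emat N i j ⊗ₖ Emat N j i : Matrix (Fin N × Fin N) (Fin N × Fin N) K) else 0)) (a,b) (c,d)
      = if a < b ∧ c = b ∧ d = a then 1 else 0 := by
    have key : (∑ i : Fin N, ∑ j : Fin N,
        (if i < j then (Emat N i j ⊗ₖ Emat N j i : Matrix (Fin N × Fin N) (Fin N × Fin N) K) else 0)) (a,b) (c,d)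
        = ∑ i : Fin N, ∑ j : Fin N, (if i < j then
            (Emat N i j : Matrix (Fin N) (Fin N) K) a c * (Emat N j i : Matrix (Fin N) (Fin N) K) b d else 0) := by
      simp [Matrix.sum_apply, ite_apply, apply_ite (fun M : Matrix (Fin N × Fin N) (Fin N × Fin N) K => M (a,b) (c,d))]
    rw [key, sum_delta_pair _ a b (by intro x y h; rcases h with h | h <;> simp [Emat_apply, h])]
    simp only [Emat_apply, ite_and, eq_comm, mul_ite, mul_one, mul_zero, ite_mul, one_mul, zero_mul]
    split_ifs <;> simp_all
  simp only [Pq, Matrix.add_apply, Matrix.smul_apply, h1, h2, h3, smul_eq_mul]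

lemma Rz_apply (N : ℕ) (q z : K) (a b c d : Fin N) :
    Rz N q z (a,b) (c,d)
      = bf z * ((if a = c ∧ b = d then 1 else 0)
          - ((if a = b ∧ a = c ∧ a = d then 1 else 0)
            + q * (if b < a ∧ c = b ∧ d = a then 1 else 0)
            + q⁻¹ * (if a < b ∧ c = b ∧ d = a then 1 else 0)))
        + bf (q * z) * (if a = d ∧ b = c then 1 else 0) := by
  simp only [Rz, Matrix.add_apply, Matrix.smul_apply, Matrix.sub_apply, Pq_apply, Pperm_apply,
    smul_eq_mul, Matrix.one_apply]
  congr 3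
  simp [Prod.ext_iff]

lemma Rz_symm (N : ℕ) (q z : K) (a b c d : Fin N) :
    Rz N q z (b, a) (d, c) = Rz N q z (Fin.rev a, Fin.rev b) (Fin.rev c, Fin.rev d) := by
  rw [Rz_apply, Rz_apply]
  have e1 : (b = d ∧ a = c) ↔ (Fin.rev a = Fin.rev c ∧ Fin.rev b = Fin.rev d) := by
    simp only [Fin.ext_iff, Fin.val_rev]; omega
  have e2 : (b = a ∧ b = d ∧ b = c) ↔
      (Fin.rev a = Fin.rev b ∧ Fin.rev a = Fin.rev c ∧ Fin.rev a = Fin.rev d) := by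
    simp only [Fin.ext_iff, Fin.val_rev]; omega
  have e3 : (a < b ∧ d = a ∧ c = b) ↔
      (Fin.rev b < Fin.rev a ∧ Fin.rev c = Fin.rev b ∧ Fin.rev d = Fin.rev a) := by
    simp only [Fin.ext_iff, Fin.lt_def, Fin.val_rev]; omega
  have e4 : (b < a ∧ d = a ∧ c = b) ↔
      (Fin.rev a < Fin.rev b ∧ Fin.rev c = Fin.rev b ∧ Fin.rev d = Fin.rev a) := by
    simp only [Fin.ext_iff, Fin.lt_def, Fin.val_rev]; omega
  have e5 : (b = c ∧ a = d) ↔ (Fin.rev a = Fin.rev d ∧ Fin.rev b = Fin.rev c) := by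
    simp only [Fin.ext_iff, Fin.val_rev]; omega
  rw [if_congr e1 rfl rfl, if_congr e2 rfl rfl, if_congr e3 rfl rfl, if_congr e4 rfl rfl,
    if_congr e5 rfl rfl]

lemma Rz_eq_zero (N : ℕ) (q z : K) (a b c d : Fin N)
    (h : ¬((a = c ∧ b = d) ∨ (a = d ∧ b = c))) : Rz N q z (a, b) (c, d) = 0 := by
  rw [Rz_apply]
  rw [if_neg, if_neg, if_neg, if_neg, if_neg]
  · ring
  all_goals simp only [Fin.ext_iff, Fin.lt_def] at h ⊢
  all_goals omega

def adInv (N : ℕ) (u : Fin N → K) : Matrix (Fin N) (Fin N) K :=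
  Matrix.of fun i j => if j = Fin.rev i then (u j)⁻¹ else 0

lemma antidiag_mul_inv (N : ℕ) (u : Fin N → K) (hu : ∀ a, u a ≠ 0) :
    antidiag N u * adInv N u = 1 := by
  ext i k
  rw [Matrix.mul_apply, sum_delta_one _ (Fin.rev i) (by intro x hx; simp [antidiag, adInv, hx, Ne.symm hx])]
  simp only [antidiag, adInv, Matrix.of_apply, Fin.rev_rev, if_pos rfl]
  by_cases hk : k = i
  · subst hk; simp [Matrix.one_apply, mul_inv_cancel₀ (hu k)]
  · simp [Matrix.one_apply, hk, Ne.symm hk]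

lemma antidiag_mul_apply (N : ℕ) (u : Fin N → K) (A : Matrix (Fin N × Fin N) (Fin N × Fin N) K)
    (i j : Fin N) (t : Fin N × Fin N) :
    ((antidiag N u ⊗ₖ antidiag N u) * A) (i, j) t
      = u i * u j * A (Fin.rev i, Fin.rev j) t := by
  rw [Matrix.mul_apply]
  rw [Finset.sum_eq_single ((Fin.rev i, Fin.rev j) : Fin N × Fin N)]
  · simp [antidiag]
  · rintro ⟨p1, p2⟩ _ hp
    have h : p1 ≠ Fin.rev i ∨ p2 ≠ Fin.rev j := by
      by_contra hc; push_neg at hc; exact hp (Prod.ext hc.1 hc.2)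
    rcases h with h | h <;> simp [antidiag, h]
  · intro h; exact absurd (Finset.mem_univ _) h

lemma mul_adInv_apply (N : ℕ) (u : Fin N → K) (A : Matrix (Fin N × Fin N) (Fin N × Fin N) K)
    (p : Fin N × Fin N) (r s : Fin N) :
    (A * (adInv N u ⊗ₖ adInv N u)) p (r, s)
      = A p (Fin.rev r, Fin.rev s) * ((u r)⁻¹ * (u s)⁻¹) := by
  rw [Matrix.mul_apply]
  rw [Finset.sum_eq_single ((Fin.rev r, Fin.rev s) : Fin N × Fin N)]
  · simp [adInv, Fin.rev_rev]
  · rintro ⟨t1, t2⟩ _ ht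
    have h : t1 ≠ Fin.rev r ∨ t2 ≠ Fin.rev s := by
      by_contra hc; push_neg at hc; exact ht (Prod.ext hc.1 hc.2)
    have h' : r ≠ Fin.rev t1 ∨ s ≠ Fin.rev t2 := by
      rcases h with h | h
      · left; intro he; exact h (by rw [he, Fin.rev_rev])
      · right; intro he; exact h (by rw [he, Fin.rev_rev])
    rcases h' with h' | h' <;> simp [adInv, h']
  · intro h; exact absurd (Finset.mem_univ _) h


/-- CP-invariance: `R₂₁(z) = (U⊗U) R₁₂(z) (U⊗U)⁻¹` for any
invertible antidiagonal `U`. -/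
theorem Rz_CP (N : ℕ) (q z : K) (hq : q ≠ 0) (hz : z ≠ 0)
    (u : Fin N → K) (hu : ∀ a, u a ≠ 0) :
    sw (Rz N q z)
      = (antidiag N u ⊗ₖ antidiag N u) * Rz N q z * (antidiag N u ⊗ₖ antidiag N u)⁻¹ := by
  have hinv : (antidiag N u ⊗ₖ antidiag N u)⁻¹ = adInv N u ⊗ₖ adInv N u := by
    apply Matrix.inv_eq_right_inv
    rw [← Matrix.mul_kronecker_mul, antidiag_mul_inv N u hu, Matrix.one_kronecker_one]
  rw [hinv]
  ext p t
  obtain ⟨i, j⟩ := p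
  obtain ⟨r, s⟩ := t
  rw [mul_adInv_apply, antidiag_mul_apply]
  show Rz N q z (j, i) (s, r) = _
  rw [Rz_symm]
  by_cases hc : (i = r ∧ j = s) ∨ (i = s ∧ j = r)
  · have h1 := hu i; have h2 := hu j
    rcases hc with ⟨rfl, rfl⟩ | ⟨rfl, rfl⟩ <;> field_simp <;> ring
  · rw [Rz_eq_zero N q z _ _ _ _ (by simpa [Fin.rev_inj] using hc)]
    ring
end
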